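/- Let G = [3^k] (the case l = m = 0), with k ≥ 1 and n = k + 1, acting on the (k+1)-dimensional space V = (ZMod p)^{k+1}, and let p ≥ 5 be prime with p | (k+2). Then the bilinear form on V is degenerate, and G^p is a proper subgroup of Ô_1(V), the subgroup of O(V) generated by all reflections r_a with a·a a nonzero square in ZMod p. -/

import Mathlib

/- Setup: the reduction mod an odd prime `p` of the `3`-infinity Coxeter group
`[3^k, ∞^l, 3^m]`, acting on `V = (ZMod p)^n` with `n = k + l + m + 1`. -/

namespace Statement13

/-- The Gram matrix of the basic system for `[3^k, ∞^l, 3^m]`, reduced mod `p`: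
diagonal entries `1`; the entry for the branch `{i−1, i}` is `−2⁻¹` if the branch is
labelled `3` (i.e. `1 ≤ i ≤ k` or `k+l+1 ≤ i ≤ n−1`) and `−1` if it is labelled `∞`
(i.e. `k+1 ≤ i ≤ k+l`); all other entries `0`. -/
def gram (p k l m : ℕ) : Matrix (Fin (k + l + m + 1)) (Fin (k + l + m + 1)) (ZMod p) :=
  fun i j =>
    if i = j then 1
    else if (j : ℕ) = (i : ℕ) + 1 then
      (if (j : ℕ) ≤ k ∨ k + l + 1 ≤ (j : ℕ) then -(2⁻¹ : ZMod p) else -1)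
    else if (i : ℕ) = (j : ℕ) + 1 then
      (if (i : ℕ) ≤ k ∨ k + l + 1 ≤ (i : ℕ) then -(2⁻¹ : ZMod p) else -1)
    else 0

/-- The corresponding symmetric bilinear form `x·y` on `V`. -/
def form (p k l m : ℕ) (x y : Fin (k + l + m + 1) → ZMod p) : ZMod p :=
  ∑ i, ∑ j, x i * gram p k l m i j * y j

/-- The general linear group of `V`. -/
abbrev GLV (p k l m : ℕ) := (Module.End (ZMod p) (Fin (k + l + m + 1) → ZMod p))ˣ

/-- `r i` is the generating reflection `r_i : x ↦ x − 2(x·b_i) b_i`. -/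
def ReflHyp (p k l m : ℕ) (r : Fin (k + l + m + 1) → GLV p k l m) : Prop :=
  ∀ i x, (r i).1 x =
    x - (2 * form p k l m x (Pi.single i 1)) •
      (Pi.single i 1 : Fin (k + l + m + 1) → ZMod p)

/-- The intersection property (string C-group condition). -/
def IsStringC (p k l m : ℕ) (r : Fin (k + l + m + 1) → GLV p k l m) : Prop :=
  ∀ I J : Set (Fin (k + l + m + 1)),
    Subgroup.closure (r '' I) ⊓ Subgroup.closure (r '' J) = Subgroup.closure (r '' (I ∩ J))

/-- `O₁(V)` (written `Ô₁(V)` when the form on `V` is degenerate): the subgroup of `O(V)`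
generated by all reflections `r_a : x ↦ x − 2((x·a)/(a·a)) a` with `a·a` a nonzero square. -/
def O1 (p k l m : ℕ) : Subgroup (GLV p k l m) :=
  Subgroup.closure {g | ∃ a : Fin (k + l + m + 1) → ZMod p,
    (∃ t : ZMod p, t ≠ 0 ∧ form p k l m a a = t ^ 2) ∧
    ∀ x, g.1 x = x - (2 * form p k l m x a * (form p k l m a a)⁻¹) • a}

/-! ### Helper machinery -/

section Helpers

variable (p k : ℕ)

/-- extension of a vector to `ℕ`-indexing, zero out of range. -/
def Xc (x : Fin (k + 0 + 0 + 1) → ZMod p) (t : ℕ) : ZMod p :=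
  if h : t < k + 0 + 0 + 1 then x ⟨t, h⟩ else 0

def Xm (x : Fin (k + 0 + 0 + 1) → ZMod p) (t : ℕ) : ZMod p :=
  if t = 0 then 0 else Xc p k x (t - 1)

/-- the map `φ : V → (ZMod p)^{k+2}`, sending `b_s` to `e_s - e_{s+1}`. -/
def phi (x : Fin (k + 0 + 0 + 1) → ZMod p) (t : Fin (k + 2)) : ZMod p :=
  Xc p k x t - Xm p k x t

variable {p k}

lemma gram_apply (i j : Fin (k + 0 + 0 + 1)) :
    gram p k 0 0 i j =
      (if i = j then (1 : ZMod p) else 0)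
        + (if (j : ℕ) = (i : ℕ) + 1 then -(2⁻¹ : ZMod p) else 0)
        + (if (i : ℕ) = (j : ℕ) + 1 then -(2⁻¹ : ZMod p) else 0) := by
  unfold gram
  simp only [Fin.ext_iff]
  split_ifs <;> first | ring1 | (exfalso; omega)

lemma sum_gram (x : Fin (k + 0 + 0 + 1) → ZMod p) (s : Fin (k + 0 + 0 + 1)) :
    (∑ i, x i * gram p k 0 0 i s)
      = x s - 2⁻¹ * Xm p k x (s : ℕ) - 2⁻¹ * Xc p k x ((s : ℕ) + 1) := by
  have hterm : ∀ i : Fin (k + 0 + 0 + 1), x i * gram p k 0 0 i s =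
      (if i = s then x i else 0)
        + (if (s : ℕ) = (i : ℕ) + 1 then -(2⁻¹ : ZMod p) * x i else 0)
        + (if (i : ℕ) = (s : ℕ) + 1 then -(2⁻¹ : ZMod p) * x i else 0) := by
    intro i
    rw [gram_apply]
    split_ifs <;> ring
  rw [Finset.sum_congr rfl fun i _ => hterm i, Finset.sum_add_distrib,
    Finset.sum_add_distrib]
  have e1 : (∑ i, if i = s then x i else 0) = x s := Fintype.sum_ite_eq' s x
  have e2 : (∑ i : Fin (k + 0 + 0 + 1), if (s : ℕ) = (i : ℕ) + 1
        then -(2⁻¹ : ZMod p) * x i else 0)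
      = -(2⁻¹ : ZMod p) * Xm p k x (s : ℕ) := by
    rcases Nat.eq_zero_or_pos (s : ℕ) with hs | hs
    · rw [Finset.sum_eq_zero, Xm, if_pos hs, mul_zero]
      intro i _
      rw [if_neg (by omega)]
    · have hlt : (s : ℕ) - 1 < k + 0 + 0 + 1 := by have := s.isLt; omega
      rw [Finset.sum_eq_single (⟨(s : ℕ) - 1, hlt⟩ : Fin (k + 0 + 0 + 1))]
      · rw [if_pos (show (s : ℕ) = (s : ℕ) - 1 + 1 by omega),
          Xm, if_neg (by omega), Xc, dif_pos hlt]
      · intro i _ hne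
        rw [if_neg]
        intro hc
        exact hne (Fin.ext (show (i : ℕ) = (s : ℕ) - 1 by omega))
      · intro h; exact absurd (Finset.mem_univ _) h
  have e3 : (∑ i : Fin (k + 0 + 0 + 1), if (i : ℕ) = (s : ℕ) + 1
        then -(2⁻¹ : ZMod p) * x i else 0)
      = -(2⁻¹ : ZMod p) * Xc p k x ((s : ℕ) + 1) := by
    by_cases hlt : (s : ℕ) + 1 < k + 0 + 0 + 1
    · rw [Finset.sum_eq_single (⟨(s : ℕ) + 1, hlt⟩ : Fin (k + 0 + 0 + 1))]
      · rw [if_pos rfl, Xc, dif_pos hlt]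
      · intro i _ hne
        rw [if_neg]
        intro hc
        exact hne (Fin.ext hc)
      · intro h; exact absurd (Finset.mem_univ _) h
    · rw [Finset.sum_eq_zero, Xc, dif_neg hlt, mul_zero]
      intro i _
      rw [if_neg]
      intro hc
      have := i.isLt
      omega
  rw [e1, e2, e3]
  ring

lemma form_eq (x y : Fin (k + 0 + 0 + 1) → ZMod p) :
    form p k 0 0 x y = ∑ j, (∑ i, x i * gram p k 0 0 i j) * y j := by
  unfold form
  rw [Finset.sum_comm]
  exact Finset.sum_congr rfl fun j _ => (Finset.sum_mul _ _ _).symm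

lemma form_single (x : Fin (k + 0 + 0 + 1) → ZMod p) (s : Fin (k + 0 + 0 + 1)) :
    form p k 0 0 x (Pi.single s 1)
      = x s - 2⁻¹ * Xm p k x (s : ℕ) - 2⁻¹ * Xc p k x ((s : ℕ) + 1) := by
  rw [form_eq, Finset.sum_eq_single s]
  · rw [Pi.single_eq_same, mul_one, sum_gram]
  · intro j _ hne
    rw [Pi.single_eq_of_ne hne, mul_zero]
  · intro h; exact absurd (Finset.mem_univ _) h

lemma form_add_right (x y z : Fin (k + 0 + 0 + 1) → ZMod p) :
    form p k 0 0 x (y + z) = form p k 0 0 x y + form p k 0 0 x z := by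
  unfold form
  simp only [Pi.add_apply, mul_add, Finset.sum_add_distrib]

lemma form_sub_right (x y z : Fin (k + 0 + 0 + 1) → ZMod p) :
    form p k 0 0 x (y - z) = form p k 0 0 x y - form p k 0 0 x z := by
  unfold form
  simp only [Pi.sub_apply, mul_sub, Finset.sum_sub_distrib]

lemma form_add_left (x y z : Fin (k + 0 + 0 + 1) → ZMod p) :
    form p k 0 0 (x + y) z = form p k 0 0 x z + form p k 0 0 y z := by
  unfold form
  simp only [Pi.add_apply, add_mul, Finset.sum_add_distrib]

lemma form_sub_left (x y z : Fin (k + 0 + 0 + 1) → ZMod p) :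
    form p k 0 0 (x - y) z = form p k 0 0 x z - form p k 0 0 y z := by
  unfold form
  simp only [Pi.sub_apply, sub_mul, Finset.sum_sub_distrib]

lemma form_smul_left (c : ZMod p) (x z : Fin (k + 0 + 0 + 1) → ZMod p) :
    form p k 0 0 (c • x) z = c * form p k 0 0 x z := by
  unfold form
  rw [Finset.mul_sum]
  refine Finset.sum_congr rfl fun i _ => ?_
  rw [Finset.mul_sum]
  refine Finset.sum_congr rfl fun j _ => ?_
  simp only [Pi.smul_apply, smul_eq_mul]
  ring

end Helpers

section Helpers2

variable {p k : ℕ}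

lemma Xc_sub (x y : Fin (k + 0 + 0 + 1) → ZMod p) (t : ℕ) :
    Xc p k (x - y) t = Xc p k x t - Xc p k y t := by
  unfold Xc; split_ifs <;> simp

lemma Xc_smul (c : ZMod p) (x : Fin (k + 0 + 0 + 1) → ZMod p) (t : ℕ) :
    Xc p k (c • x) t = c * Xc p k x t := by
  unfold Xc; split_ifs <;> simp

lemma Xm_zero (x : Fin (k + 0 + 0 + 1) → ZMod p) : Xm p k x 0 = 0 := if_pos rfl

lemma Xm_succ (x : Fin (k + 0 + 0 + 1) → ZMod p) (t : ℕ) :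
    Xm p k x (t + 1) = Xc p k x t := by
  unfold Xm
  rw [if_neg (Nat.succ_ne_zero t), Nat.add_sub_cancel]

lemma Xm_sub (x y : Fin (k + 0 + 0 + 1) → ZMod p) (t : ℕ) :
    Xm p k (x - y) t = Xm p k x t - Xm p k y t := by
  unfold Xm
  split_ifs
  · simp
  · exact Xc_sub x y (t - 1)

lemma Xm_smul (c : ZMod p) (x : Fin (k + 0 + 0 + 1) → ZMod p) (t : ℕ) :
    Xm p k (c • x) t = c * Xm p k x t := by
  unfold Xm
  split_ifs
  · simp
  · exact Xc_smul c x (t - 1)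

lemma phi_sub (x y : Fin (k + 0 + 0 + 1) → ZMod p) (t : Fin (k + 2)) :
    phi p k (x - y) t = phi p k x t - phi p k y t := by
  unfold phi; rw [Xc_sub, Xm_sub]; ring

lemma phi_smul (c : ZMod p) (x : Fin (k + 0 + 0 + 1) → ZMod p) (t : Fin (k + 2)) :
    phi p k (c • x) t = c * phi p k x t := by
  unfold phi; rw [Xc_smul, Xm_smul]; ring

lemma Xc_single (s : Fin (k + 0 + 0 + 1)) (t : ℕ) :
    Xc p k (Pi.single s (1 : ZMod p)) t = if t = (s : ℕ) then 1 else 0 := by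
  unfold Xc
  by_cases h : t < k + 0 + 0 + 1
  · rw [dif_pos h, Pi.single_apply]
    simp only [Fin.ext_iff, Fin.val_mk]
  · rw [dif_neg h, if_neg]
    have := s.isLt
    omega

lemma phi_single (s : Fin (k + 0 + 0 + 1)) (t : Fin (k + 2)) :
    phi p k (Pi.single s 1) t
      = (if (t : ℕ) = (s : ℕ) then 1 else 0)
        - (if (t : ℕ) = (s : ℕ) + 1 then 1 else 0) := by
  unfold phi Xm
  rw [Xc_single]
  by_cases h0 : (t : ℕ) = 0
  · rw [if_pos h0, if_neg (show ¬((t : ℕ) = (s : ℕ) + 1) by omega)]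
  · rw [if_neg h0, Xc_single]
    have : (if (t : ℕ) - 1 = (s : ℕ) then (1 : ZMod p) else 0)
        = if (t : ℕ) = (s : ℕ) + 1 then 1 else 0 := if_congr (by omega) rfl rfl
    rw [this]

lemma natcast_ne (hp5 : 5 ≤ p) {m : ℕ} (h0 : 0 < m) (h4 : m < 5) :
    ((m : ℕ) : ZMod p) ≠ 0 := by
  rw [Ne, ZMod.natCast_eq_zero_iff]
  intro hdvd
  have := Nat.le_of_dvd h0 hdvd
  omega

lemma two_ne (hp5 : 5 ≤ p) : (2 : ZMod p) ≠ 0 := by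
  have := natcast_ne (p := p) hp5 (m := 2) (by norm_num) (by norm_num)
  exact_mod_cast this

lemma one_ne (hp5 : 5 ≤ p) : (1 : ZMod p) ≠ 0 := by
  have := natcast_ne (p := p) hp5 (m := 1) (by norm_num) (by norm_num)
  exact_mod_cast this

lemma four_ne (hp5 : 5 ≤ p) : (4 : ZMod p) ≠ 0 := by
  have := natcast_ne (p := p) hp5 (m := 4) (by norm_num) (by norm_num)
  exact_mod_cast this

lemma three_ne (hp : p.Prime) (hp5 : 5 ≤ p) : (3 : ZMod p) ≠ 0 := by
  have : ((3 : ℕ) : ZMod p) ≠ 0 := by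
    rw [Ne, ZMod.natCast_eq_zero_iff]
    intro hdvd
    have := Nat.le_of_dvd (by norm_num) hdvd
    omega
  exact_mod_cast this

lemma nine_ne (hp : p.Prime) (hp5 : 5 ≤ p) : (9 : ZMod p) ≠ 0 := by
  haveI : Fact p.Prime := ⟨hp⟩
  have h3 := three_ne hp hp5
  intro h9
  apply h3
  have : (9 : ZMod p) = 3 * 3 := by norm_num
  rw [this] at h9
  rcases mul_eq_zero.mp h9 with h | h <;> exact h

lemma two_form_single (hp : p.Prime) (hp5 : 5 ≤ p)
    (x : Fin (k + 0 + 0 + 1) → ZMod p) (s : Fin (k + 0 + 0 + 1)) :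
    2 * form p k 0 0 x (Pi.single s 1)
      = phi p k x (Fin.castSucc s) - phi p k x (Fin.succ s) := by
  haveI : Fact p.Prime := ⟨hp⟩
  have hhalf : (2 : ZMod p) * 2⁻¹ = 1 := mul_inv_cancel₀ (two_ne hp5)
  have hx : Xc p k x (s : ℕ) = x s := by
    unfold Xc
    rw [dif_pos s.isLt]
  have hcs : phi p k x (Fin.castSucc s) = x s - Xm p k x (s : ℕ) := by
    unfold phi
    rw [Fin.coe_castSucc, hx]
  have hsu : phi p k x (Fin.succ s) = Xc p k x ((s : ℕ) + 1) - x s := by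
    unfold phi
    rw [Fin.val_succ, Xm_succ, hx]
  rw [form_single, hcs, hsu]
  linear_combination (-(Xm p k x (s : ℕ)) - Xc p k x ((s : ℕ) + 1)) * hhalf

lemma phi_refl (hp : p.Prime) (hp5 : 5 ≤ p) (x : Fin (k + 0 + 0 + 1) → ZMod p)
    (s : Fin (k + 0 + 0 + 1)) (t : Fin (k + 2)) :
    phi p k (x - (2 * form p k 0 0 x (Pi.single s 1)) •
        (Pi.single s 1 : Fin (k + 0 + 0 + 1) → ZMod p)) t
      = phi p k x (Equiv.swap (Fin.castSucc s) (Fin.succ s) t) := by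
  rw [phi_sub, phi_smul, phi_single, two_form_single hp hp5]
  by_cases h1 : t = Fin.castSucc s
  · subst h1
    rw [Equiv.swap_apply_left]
    rw [if_pos (Fin.coe_castSucc s)]
    rw [if_neg (show ¬((Fin.castSucc s : ℕ) = (s : ℕ) + 1) by
      rw [Fin.coe_castSucc]; omega)]
    ring
  · by_cases h2 : t = Fin.succ s
    · subst h2
      rw [Equiv.swap_apply_right]
      rw [if_neg (show ¬((Fin.succ s : ℕ) = (s : ℕ)) by rw [Fin.val_succ]; omega)]
      rw [if_pos (Fin.val_succ s)]
      ring
    · rw [Equiv.swap_apply_of_ne_of_ne h1 h2]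
      have hc1 : ¬((t : ℕ) = (s : ℕ)) := fun hc =>
        h1 (Fin.ext (by rw [Fin.coe_castSucc]; exact hc))
      have hc2 : ¬((t : ℕ) = (s : ℕ) + 1) := fun hc =>
        h2 (Fin.ext (by rw [Fin.val_succ]; exact hc))
      rw [if_neg hc1, if_neg hc2]
      ring

end Helpers2


section Helpers3

variable {p k : ℕ}

/-- the vector `a = b_0 - b_1 + 2 b_2`, with `φ(a) = e_0 - 2e_1 + 3e_2 - 2e_3` and
`a·a = 9`, a nonzero square. -/
def aVec (p k : ℕ) : Fin (k + 0 + 0 + 1) → ZMod p :=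
  fun i => if (i : ℕ) = 0 then 1 else if (i : ℕ) = 1 then -1 else
    if (i : ℕ) = 2 then 2 else 0

lemma Xc_aVec (hk3 : 3 ≤ k) (t : ℕ) :
    Xc p k (aVec p k) t
      = if t = 0 then 1 else if t = 1 then -1 else if t = 2 then 2 else 0 := by
  unfold Xc aVec
  by_cases h : t < k + 0 + 0 + 1
  · rw [dif_pos h]
  · rw [dif_neg h, if_neg (show ¬(t = 0) by omega), if_neg (show ¬(t = 1) by omega),
      if_neg (show ¬(t = 2) by omega)]

lemma aVec_decomp (hk3 : 3 ≤ k) :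
    aVec p k = (Pi.single (⟨0, by omega⟩ : Fin (k + 0 + 0 + 1)) 1
        - Pi.single (⟨1, by omega⟩ : Fin (k + 0 + 0 + 1)) 1)
      + (Pi.single (⟨2, by omega⟩ : Fin (k + 0 + 0 + 1)) 1
        + Pi.single (⟨2, by omega⟩ : Fin (k + 0 + 0 + 1)) 1) := by
  funext i
  simp only [Pi.add_apply, Pi.sub_apply, Pi.single_apply, aVec, Fin.ext_iff, Fin.val_mk]
  split_ifs <;> first | ring1 | (exfalso; omega)

lemma form_aa (hp : p.Prime) (hp5 : 5 ≤ p) (hk3 : 3 ≤ k) :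
    form p k 0 0 (aVec p k) (aVec p k) = 9 := by
  haveI : Fact p.Prime := ⟨hp⟩
  have hhalf : (2 : ZMod p) * 2⁻¹ = 1 := mul_inv_cancel₀ (two_ne hp5)
  nth_rewrite 2 [aVec_decomp hk3]
  rw [form_add_right, form_sub_right, form_add_right, form_single, form_single,
    form_single]
  simp only [Fin.val_mk]
  have m1 : Xm p k (aVec p k) 1 = 1 := by
    unfold Xm
    norm_num [Xc_aVec hk3]
  have m2 : Xm p k (aVec p k) 2 = -1 := by
    unfold Xm
    norm_num [Xc_aVec hk3]
  rw [Xm_zero, m1, m2, Xc_aVec hk3, Xc_aVec hk3, Xc_aVec hk3]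
  norm_num [aVec]
  linear_combination 3 * hhalf

/-- the extra reflection `r_a`. -/
def gmap (p k : ℕ) : Module.End (ZMod p) (Fin (k + 0 + 0 + 1) → ZMod p) where
  toFun x := x - (2 * form p k 0 0 x (aVec p k) *
      (form p k 0 0 (aVec p k) (aVec p k))⁻¹) • aVec p k
  map_add' x y := by
    rw [form_add_left]
    match_scalars <;> ring
  map_smul' c x := by
    rw [form_smul_left]
    simp only [RingHom.id_apply]
    match_scalars <;> ring

lemma gmap_invol (hp : p.Prime) (hp5 : 5 ≤ p) (hk3 : 3 ≤ k) (x : Fin (k + 0 + 0 + 1) → ZMod p) :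
    gmap p k (gmap p k x) = x := by
  haveI : Fact p.Prime := ⟨hp⟩
  have hq := form_aa (p := p) (k := k) hp hp5 hk3
  have h9 : (9 : ZMod p) * 9⁻¹ = 1 := mul_inv_cancel₀ (nine_ne hp hp5)
  have gdef : ∀ y : Fin (k + 0 + 0 + 1) → ZMod p, gmap p k y
      = y - (2 * form p k 0 0 y (aVec p k) *
          (form p k 0 0 (aVec p k) (aVec p k))⁻¹) • aVec p k := fun y => rfl
  rw [gdef (gmap p k x), gdef x, hq, form_sub_left, form_smul_left, hq]
  set F := form p k 0 0 x (aVec p k) with hF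
  match_scalars
  · ring
  · linear_combination (4 * F * (9 : ZMod p)⁻¹) * h9

/-- the radical vector `c = (1, 2, …, k+1)`. -/
def cvec (p k : ℕ) : Fin (k + 0 + 0 + 1) → ZMod p := fun i => ((i : ℕ) : ZMod p) + 1

lemma cvec_ne_zero (hp : p.Prime) (hp5 : 5 ≤ p) : cvec p k ≠ 0 := by
  haveI : Fact p.Prime := ⟨hp⟩
  intro h
  have h0 := congrFun h ⟨0, by omega⟩
  simp only [cvec, Pi.zero_apply, Fin.val_mk, Nat.cast_zero, zero_add] at h0
  exact one_ne (p := p) hp5 h0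

lemma form_cvec (hp : p.Prime) (hp5 : 5 ≤ p) (hd : p ∣ (k + 2))
    (y : Fin (k + 0 + 0 + 1) → ZMod p) :
    form p k 0 0 (cvec p k) y = 0 := by
  haveI : Fact p.Prime := ⟨hp⟩
  have hhalf : (2 : ZMod p) * 2⁻¹ = 1 := mul_inv_cancel₀ (two_ne hp5)
  rw [form_eq]
  apply Finset.sum_eq_zero
  intro j _
  have hXm : Xm p k (cvec p k) (j : ℕ) = ((j : ℕ) : ZMod p) := by
    rcases Nat.eq_zero_or_pos (j : ℕ) with h0 | h0
    · rw [h0, Xm_zero, Nat.cast_zero]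
    · obtain ⟨t, ht⟩ : ∃ t, (j : ℕ) = t + 1 := ⟨(j : ℕ) - 1, by omega⟩
      rw [ht, Xm_succ]
      unfold Xc cvec
      have hlt : t < k + 0 + 0 + 1 := by have := j.isLt; omega
      rw [dif_pos hlt]
      simp only [Fin.val_mk]
      push_cast
      ring
  have hc : cvec p k j = ((j : ℕ) : ZMod p) + 1 := rfl
  have hz : (∑ i, cvec p k i * gram p k 0 0 i j) = 0 := by
    rw [sum_gram, hc, hXm]
    by_cases hj : (j : ℕ) < k
    · have hXc : Xc p k (cvec p k) ((j : ℕ) + 1) = ((j : ℕ) : ZMod p) + 2 := by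
        unfold Xc cvec
        rw [dif_pos (show (j : ℕ) + 1 < k + 0 + 0 + 1 by omega)]
        simp only [Fin.val_mk]
        push_cast
        ring
      rw [hXc]
      linear_combination (-(((j : ℕ) : ZMod p)) - 1) * hhalf
    · have hjk : (j : ℕ) = k := by have := j.isLt; omega
      have hXc : Xc p k (cvec p k) ((j : ℕ) + 1) = 0 := by
        unfold Xc
        rw [dif_neg (show ¬((j : ℕ) + 1 < k + 0 + 0 + 1) by omega)]
      have hk2 : ((j : ℕ) : ZMod p) + 2 = 0 := by
        have hz2 : ((k + 2 : ℕ) : ZMod p) = 0 := (ZMod.natCast_eq_zero_iff _ _).mpr hd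
        rw [hjk]
        push_cast at hz2
        exact hz2
      rw [hXc]
      linear_combination hhalf + (1 - (2 : ZMod p)⁻¹) * hk2
  rw [hz, zero_mul]

lemma phi_aVec_ne (hp : p.Prime) (hp5 : 5 ≤ p) (hk3 : 3 ≤ k) (j : Fin (k + 2)) :
    phi p k (aVec p k) j ≠ -1 := by
  haveI : Fact p.Prime := ⟨hp⟩
  unfold phi Xm
  rw [Xc_aVec hk3]
  intro hc
  by_cases h0 : (j : ℕ) = 0
  · rw [if_pos h0, if_pos h0] at hc
    exact two_ne hp5 (by linear_combination hc)
  rw [if_neg h0, if_neg h0, Xc_aVec hk3] at hc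
  by_cases h1 : (j : ℕ) = 1
  · rw [if_pos h1, if_pos (show (j : ℕ) - 1 = 0 by omega)] at hc
    exact one_ne hp5 (by linear_combination -hc)
  rw [if_neg h1, if_neg (show ¬((j : ℕ) - 1 = 0) by omega)] at hc
  by_cases h2 : (j : ℕ) = 2
  · rw [if_pos h2, if_pos (show (j : ℕ) - 1 = 1 by omega)] at hc
    exact four_ne hp5 (by linear_combination hc)
  rw [if_neg h2, if_neg (show ¬((j : ℕ) - 1 = 1) by omega)] at hc
  by_cases h3 : (j : ℕ) = 3
  · rw [if_pos (show (j : ℕ) - 1 = 2 by omega)] at hc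
    exact one_ne hp5 (by linear_combination -hc)
  rw [if_neg (show ¬((j : ℕ) - 1 = 2) by omega)] at hc
  exact one_ne hp5 (by linear_combination hc)

lemma closure_phi (hp : p.Prime) (hp5 : 5 ≤ p)
    (r : Fin (k + 0 + 0 + 1) → GLV p k 0 0) (hr : ReflHyp p k 0 0 r)
    {g : GLV p k 0 0} (hg : g ∈ Subgroup.closure (Set.range r)) :
    ∃ σ : Equiv.Perm (Fin (k + 2)), ∀ (x : Fin (k + 0 + 0 + 1) → ZMod p) (t : Fin (k + 2)),
      phi p k (g.1 x) t = phi p k x (σ t) := by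
  induction hg using Subgroup.closure_induction with
  | mem gg hgg =>
    obtain ⟨i, rfl⟩ := hgg
    refine ⟨Equiv.swap (Fin.castSucc i) (Fin.succ i), fun x t => ?_⟩
    rw [hr i x]
    exact phi_refl hp hp5 x i t
  | one =>
    refine ⟨Equiv.refl _, fun x t => ?_⟩
    simp
  | mul g1 g2 _ _ ih1 ih2 =>
    obtain ⟨σ1, H1⟩ := ih1
    obtain ⟨σ2, H2⟩ := ih2
    refine ⟨σ1.trans σ2, fun x t => ?_⟩
    rw [Units.val_mul, Module.End.mul_apply, H1, H2, Equiv.trans_apply]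
  | inv g1 _ ih =>
    obtain ⟨σ1, H1⟩ := ih
    refine ⟨σ1.symm, fun x t => ?_⟩
    have key := H1 ((g1⁻¹).1 x) (σ1.symm t)
    have hfix : g1.1 ((g1⁻¹).1 x) = x := by
      rw [← Module.End.mul_apply, Units.mul_inv, Module.End.one_apply]
    rw [hfix, Equiv.apply_symm_apply] at key
    exact key.symm

end Helpers3

/-- for `G = [3^k]` on `V = (ZMod p)^{k+1}` with `p ≥ 5` and `p ∣ (k+2)`,
the form is degenerate and `Gᵖ` is a proper subgroup of `Ô₁(V)`. -/
theorem statement13 (p k : ℕ) (hp : p.Prime) (hp5 : 5 ≤ p) (hk : 1 ≤ k)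
    (hd : p ∣ (k + 2))
    (r : Fin (k + 0 + 0 + 1) → GLV p k 0 0) (hr : ReflHyp p k 0 0 r) :
    (∃ c : Fin (k + 0 + 0 + 1) → ZMod p, c ≠ 0 ∧ ∀ y, form p k 0 0 c y = 0) ∧
    Subgroup.closure (Set.range r) < O1 p k 0 0 := by
  haveI : Fact p.Prime := ⟨hp⟩
  have hk3 : 3 ≤ k := by
    have hle : p ≤ k + 2 := Nat.le_of_dvd (by omega) hd
    omega
  refine ⟨⟨cvec p k, cvec_ne_zero hp hp5, form_cvec hp hp5 hd⟩, ?_⟩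
  have hle : Subgroup.closure (Set.range r) ≤ O1 p k 0 0 := by
    rw [Subgroup.closure_le]
    rintro g ⟨i, rfl⟩
    apply Subgroup.subset_closure
    have hbb : form p k 0 0 (Pi.single i 1) (Pi.single i 1) = 1 := by
      rw [form_single, Pi.single_eq_same]
      have hXm : Xm p k (Pi.single i (1 : ZMod p)) (i : ℕ) = 0 := by
        rcases Nat.eq_zero_or_pos (i : ℕ) with h0 | h0
        · rw [h0, Xm_zero]
        · obtain ⟨t, ht⟩ : ∃ t, (i : ℕ) = t + 1 := ⟨(i : ℕ) - 1, by omega⟩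
          rw [ht, Xm_succ, Xc_single, if_neg (show ¬(t = (i : ℕ)) by omega)]
      have hXc : Xc p k (Pi.single i (1 : ZMod p)) ((i : ℕ) + 1) = 0 := by
        rw [Xc_single, if_neg (show ¬((i : ℕ) + 1 = (i : ℕ)) by omega)]
      rw [hXm, hXc]
      ring
    refine ⟨Pi.single i 1, ⟨1, one_ne hp5, by rw [hbb]; norm_num⟩, fun x => ?_⟩
    rw [hr i x, hbb, inv_one, mul_one]
  have hmm : gmap p k * gmap p k = 1 := by
    apply LinearMap.ext
    intro x
    rw [Module.End.mul_apply, Module.End.one_apply]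
    exact gmap_invol hp hp5 hk3 x
  have hgm : (⟨gmap p k, gmap p k, hmm, hmm⟩ : GLV p k 0 0) ∈ O1 p k 0 0 := by
    apply Subgroup.subset_closure
    exact ⟨aVec p k, ⟨3, three_ne hp hp5, by rw [form_aa hp hp5 hk3]; norm_num⟩,
      fun x => rfl⟩
  have hgnot : (⟨gmap p k, gmap p k, hmm, hmm⟩ : GLV p k 0 0) ∉
      Subgroup.closure (Set.range r) := by
    intro hmem
    obtain ⟨σ, H⟩ := closure_phi hp hp5 r hr hmem
    have t0lt : (0 : ℕ) < k + 2 := by omega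
    have hga : (gmap p k) (aVec p k) = aVec p k - (2 : ZMod p) • aVec p k := by
      have gdef : (gmap p k) (aVec p k)
          = aVec p k - (2 * form p k 0 0 (aVec p k) (aVec p k) *
            (form p k 0 0 (aVec p k) (aVec p k))⁻¹) • aVec p k := rfl
      rw [gdef, form_aa hp hp5 hk3]
      congr 2
      rw [mul_assoc, mul_inv_cancel₀ (nine_ne hp hp5), mul_one]
    have key := H (aVec p k) ⟨0, t0lt⟩
    rw [show ((⟨gmap p k, gmap p k, hmm, hmm⟩ : GLV p k 0 0)).1 = gmap p k from rfl] at key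
    rw [hga, phi_sub, phi_smul] at key
    have h0 : phi p k (aVec p k) (⟨0, t0lt⟩ : Fin (k + 2)) = 1 := by
      unfold phi
      rw [show ((⟨0, t0lt⟩ : Fin (k + 2)) : ℕ) = 0 from rfl, Xm_zero, Xc_aVec hk3]
      norm_num
    rw [h0] at key
    exact phi_aVec_ne hp hp5 hk3 (σ ⟨0, t0lt⟩) (by linear_combination -key)
  exact lt_of_le_of_ne hle (fun heq => hgnot (by rw [heq]; exact hgm))


end Statement13
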